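/- arXiv:1404.4227 — 4 statements merged into one kernel-verified Lean document; each statement's English description precedes it below -/
import Mathlib

section
/- An n-dimensional real subspace π of Cⁿ is totally real (i.e. i·π ∩ π = {0}) if and only if α restricted to π is nonzero, where α = dz₁ ∧ ⋯ ∧ dzₙ is the standard complex volume form. Equivalently, for a basis v₁, …, vₙ of π, π is totally real iff α(v₁, …, vₙ) ≠ 0. -/
/-- An `n`-dimensional real subspace `π` of `ℂⁿ` (given by a real basis
`b`) is totally real (`i·π ∩ π = {0}`) iff the standard complex volume form
`α = dz₁ ∧ ⋯ ∧ dzₙ` is nonzero on it, i.e. iff `α(b₁,…,bₙ) = det (bⱼ)ᵢ ≠ 0`. -/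
theorem stmt2 {n : ℕ} (π : Submodule ℝ (Fin n → ℂ)) (b : Module.Basis (Fin n) ℝ π) :
    (∀ x ∈ π, Complex.I • x ∈ π → x = 0) ↔
      (Matrix.of fun i j => ((b j : Fin n → ℂ) i)).det ≠ 0 := by
  set M : Matrix (Fin n) (Fin n) ℂ := Matrix.of fun i j => ((b j : Fin n → ℂ) i) with hM
  have mulVec_eq : ∀ c : Fin n → ℂ, M.mulVec c = ∑ j, c j • ((b j : Fin n → ℂ)) := by
    intro c
    funext i
    simp [hM, Matrix.mulVec, dotProduct, Finset.sum_apply, mul_comm]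
  constructor
  · intro h hdet
    obtain ⟨c, hc0, hcv⟩ := Matrix.exists_mulVec_eq_zero_iff.mpr hdet
    rw [mulVec_eq] at hcv
    set x : π := ∑ j, (c j).im • b j with hx
    set y : π := ∑ j, (c j).re • b j with hy
    have hxc : (x : Fin n → ℂ) = ∑ j, (c j).im • ((b j : Fin n → ℂ)) := by
      simp [hx]
    have hyc : (y : Fin n → ℂ) = ∑ j, (c j).re • ((b j : Fin n → ℂ)) := by
      simp [hy]
    have hsplit : (y : Fin n → ℂ) + Complex.I • (x : Fin n → ℂ) = 0 := by
      rw [hxc, hyc, Finset.smul_sum, ← Finset.sum_add_distrib, ← hcv]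
      refine Finset.sum_congr rfl fun j _ => ?_
      funext i
      simp only [Pi.add_apply, Pi.smul_apply, Complex.real_smul, smul_eq_mul]
      conv_rhs => rw [← Complex.re_add_im (c j)]
      ring
    have hix : Complex.I • (x : Fin n → ℂ) ∈ π := by
      have heq : Complex.I • (x : Fin n → ℂ) = -(y : Fin n → ℂ) :=
        eq_neg_of_add_eq_zero_right hsplit
      rw [heq]
      exact π.neg_mem y.2
    have hx0 : x = 0 := Subtype.ext (h x x.2 hix)
    have him : ∀ j, (c j).im = 0 := by
      have : b.equivFun.symm (fun j => (c j).im) = 0 := by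
        rw [Module.Basis.equivFun_symm_apply, ← hx, hx0]
      have h2 := (LinearEquiv.map_eq_zero_iff b.equivFun.symm).mp this
      intro j; exact congrFun h2 j
    have hy0 : y = 0 := by
      have hyc0 : (y : Fin n → ℂ) = 0 := by
        have : (y : Fin n → ℂ) + Complex.I • (x : Fin n → ℂ) = 0 := hsplit
        rw [hx0] at this
        simpa using this
      exact Subtype.ext hyc0
    have hre : ∀ j, (c j).re = 0 := by
      have : b.equivFun.symm (fun j => (c j).re) = 0 := by
        rw [Module.Basis.equivFun_symm_apply, ← hy, hy0]
      have h2 := (LinearEquiv.map_eq_zero_iff b.equivFun.symm).mp this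
      intro j; exact congrFun h2 j
    exact hc0 (funext fun j => Complex.ext (hre j) (him j))
  · intro hdet x hxπ hixπ
    set u : π := ⟨x, hxπ⟩ with hu
    set w : π := ⟨Complex.I • x, hixπ⟩ with hw
    set c : Fin n → ℂ := fun j => Complex.I * (b.repr u j) - (b.repr w j) with hc
    have hcsum : ∑ j, c j • ((b j : Fin n → ℂ)) = 0 := by
      have husum : (u : Fin n → ℂ) = ∑ j, (b.repr u j : ℂ) • ((b j : Fin n → ℂ)) := by
        conv_lhs => rw [← b.sum_repr u]
        push_cast [Submodule.coe_sum]
        refine Finset.sum_congr rfl fun j _ => ?_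
        funext i
        simp [Complex.real_smul]
      have hwsum : (w : Fin n → ℂ) = ∑ j, (b.repr w j : ℂ) • ((b j : Fin n → ℂ)) := by
        conv_lhs => rw [← b.sum_repr w]
        push_cast [Submodule.coe_sum]
        refine Finset.sum_congr rfl fun j _ => ?_
        funext i
        simp [Complex.real_smul]
      have : Complex.I • (u : Fin n → ℂ) - (w : Fin n → ℂ) = 0 := by
        simp [hu, hw]
      rw [husum, hwsum, Finset.smul_sum, ← Finset.sum_sub_distrib] at this
      rw [← this]
      refine Finset.sum_congr rfl fun j _ => ?_
      rw [hc, sub_smul, smul_smul]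
    have hc0 : c = 0 := by
      by_contra hne
      exact hdet (Matrix.exists_mulVec_eq_zero_iff.mp
        ⟨c, hne, by rw [mulVec_eq]; exact hcsum⟩)
    have hru : ∀ j, b.repr u j = 0 := by
      intro j
      have := congrFun hc0 j
      simp only [hc, Pi.zero_apply, sub_eq_zero] at this
      have him := congrArg Complex.im this
      simpa using him
    have hu0 : u = 0 := by
      have : b.repr u = 0 := Finsupp.ext hru
      exact (LinearEquiv.map_eq_zero_iff b.repr).mp this
    simpa [hu] using congrArg Subtype.val hu0
end

section
/- Let V be a complex n-dimensional Hermitian vector space with Hermitian metric h = g − iω (g the real inner product, ω the symplectic form). Let e₁, …, eₙ be g-orthonormal vectors in V spanning a totally real subspace π. Then det_C(h(eᵢ, eⱼ)) is a real number satisfying 0 < det_C(h(eᵢ,eⱼ)) ≤ 1, with equality det_C(h(eᵢ,eⱼ)) = 1 if and only if π is Lagrangian (i.e. ω(eᵢ, eⱼ) = 0 for all i, j). -/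
open scoped InnerProductSpace ComplexOrder Matrix

/-- For `g`-orthonormal vectors `e₁,…,eₙ` spanning a totally real subspace
of an `n`-dimensional Hermitian space `V` (with `h = g - iω`), the complex determinant
`det_C(h(eᵢ,eⱼ))` is real, lies in `(0,1]`, and equals `1` iff the subspace is
Lagrangian (`ω(eᵢ,eⱼ) = 0` for all `i,j`). -/
theorem stmt4 {n : ℕ} {V : Type*} [NormedAddCommGroup V] [InnerProductSpace ℂ V]
    [FiniteDimensional ℂ V] (hdim : Module.finrank ℂ V = n)
    (e : Fin n → V)
    (horth : ∀ i j, (⟪e i, e j⟫_ℂ).re = if i = j then 1 else 0)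
    (htr : ∀ x ∈ Submodule.span ℝ (Set.range e),
      Complex.I • x ∈ Submodule.span ℝ (Set.range e) → x = 0) :
    let D : ℂ := (Matrix.of fun i j => (⟪e i, e j⟫_ℂ)).det
    D.im = 0 ∧ 0 < D.re ∧ D.re ≤ 1 ∧
      (D.re = 1 ↔ ∀ i j, (⟪e i, e j⟫_ℂ).im = 0) := by
  intro D
  set M : Matrix (Fin n) (Fin n) ℂ := Matrix.of fun i j => (⟪e i, e j⟫_ℂ) with hMdef
  have hMapp : ∀ i j, M i j = ⟪e i, e j⟫_ℂ := fun i j => rfl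
  have hM : M.IsHermitian := by
    ext i j
    simp only [Matrix.conjTranspose_apply, hMapp, RCLike.star_def, inner_conj_symm]
  -- real coefficient extraction
  have key : ∀ (c : Fin n → ℝ) (i : Fin n), (⟪e i, ∑ j, c j • e j⟫_ℂ).re = c i := by
    intro c i
    rw [inner_sum]
    rw [Complex.re_sum]
    have : ∀ j, (⟪e i, c j • e j⟫_ℂ).re = c j * ((⟪e i, e j⟫_ℂ).re) := by
      intro j
      rw [RCLike.real_smul_eq_coe_smul (K := ℂ), inner_smul_right]
      simp
    simp_rw [this, horth]
    simp
  -- linear independence over ℂ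
  have hli : LinearIndependent ℂ e := by
    rw [Fintype.linearIndependent_iff]
    intro x hx
    set a : Fin n → ℝ := fun i => (x i).re with ha
    set b : Fin n → ℝ := fun i => (x i).im with hb
    set u : V := ∑ j, a j • e j with hu
    set w : V := ∑ j, b j • e j with hw
    have hmem : ∀ (c : Fin n → ℝ), (∑ j, c j • e j) ∈ Submodule.span ℝ (Set.range e) := by
      intro c
      exact Submodule.sum_mem _ fun j _ =>
        Submodule.smul_mem _ _ (Submodule.subset_span ⟨j, rfl⟩)
    have hxs : ∀ j, x j • e j = a j • e j + Complex.I • (b j • e j) := by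
      intro j
      have : x j = (a j : ℂ) + (b j : ℂ) * Complex.I := by
        simp [ha, hb, Complex.ext_iff]
      rw [this, add_smul]
      congr 1
      rw [mul_comm, mul_smul, Complex.coe_smul]
    have hsum : u + Complex.I • w = 0 := by
      rw [hu, hw, Finset.smul_sum, ← Finset.sum_add_distrib]
      simp_rw [← hxs]
      exact hx
    have hIW : Complex.I • w ∈ Submodule.span ℝ (Set.range e) := by
      have : Complex.I • w = -u := by linear_combination (norm := module) hsum
      rw [this]
      exact Submodule.neg_mem _ (hmem a)
    have hw0 : w = 0 := htr w (hmem b) hIW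
    have hu0 : u = 0 := by
      have := hsum
      rw [hw0, smul_zero, add_zero] at this
      exact this
    intro i
    have hai : a i = 0 := by
      have := key a i
      rw [← hu, hu0, inner_zero_right] at this
      simpa using this.symm
    have hbi : b i = 0 := by
      have := key b i
      rw [← hw, hw0, inner_zero_right] at this
      simpa using this.symm
    exact Complex.ext hai hbi
  -- positive definiteness
  have hpd : M.PosDef := by
    refine Matrix.posDef_iff_dotProduct_mulVec.mpr ⟨hM, fun x hx => ?_⟩
    set y : V := ∑ i, x i • e i with hy
    have hy0 : y ≠ 0 := by
      intro h
      apply hx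
      funext i
      exact (Fintype.linearIndependent_iff.mp hli) x h i
    have hdot : dotProduct (star x) (M *ᵥ x) = ⟪y, y⟫_ℂ := by
      rw [hy, sum_inner]
      simp only [dotProduct, Matrix.mulVec, Pi.star_apply, inner_smul_left,
        inner_sum, inner_smul_right, Finset.mul_sum]
      refine Finset.sum_congr rfl fun i _ => Finset.sum_congr rfl fun j _ => ?_
      rw [hMapp]
      simp only [RCLike.star_def]
      ring
    rw [hdot, inner_self_eq_norm_sq_to_K]
    have h3 : (0:ℝ) < ‖y‖ ^ 2 := pow_pos (norm_pos_iff.mpr hy0) 2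
    calc (0:ℂ) = ((0:ℝ):ℂ) := by norm_num
    _ < ((‖y‖ ^ 2 : ℝ) : ℂ) := Complex.real_lt_real.mpr h3
    _ = (‖y‖ : ℂ) ^ 2 := by push_cast; ring
  -- eigenvalues
  set μ : Fin n → ℝ := hM.eigenvalues with hμ
  have hμpos : ∀ i, 0 < μ i := fun i => hpd.eigenvalues_pos i
  have hdet : M.det = ((∏ i, μ i : ℝ) : ℂ) := by
    rw [hM.det_eq_prod_eigenvalues]
    push_cast
    rfl
  -- diagonal entries are 1
  have hdiag : ∀ i, M i i = 1 := by
    intro i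
    have him : (M i i).im = 0 := by
      have h2 := congrArg Complex.im (congrFun (congrFun hM i) i)
      simp [Matrix.conjTranspose_apply] at h2
      linarith
    have hre : (M i i).re = 1 := (horth i i).trans (if_pos rfl)
    exact Complex.ext hre him
  have htrace : M.trace = (n : ℂ) := by
    rw [Matrix.trace]
    simp_rw [Matrix.diag]
    rw [Finset.sum_congr rfl fun i _ => hdiag i]
    simp
  have htrace2 : ∑ i, μ i = n := by
    have hst := hM.spectral_theorem
    have h1 : M.trace = ∑ i, ((μ i : ℝ) : ℂ) := by
      conv_lhs => rw [hst]
      rw [Unitary.conjStarAlgAut_apply]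
      rw [Matrix.trace_mul_cycle]
      rw [show (star (hM.eigenvectorUnitary : Matrix (Fin n) (Fin n) ℂ)) *
        (hM.eigenvectorUnitary : Matrix (Fin n) (Fin n) ℂ) = 1 from
        Matrix.mem_unitaryGroup_iff'.mp hM.eigenvectorUnitary.2, one_mul,
        Matrix.trace_diagonal]
      rfl
    have h2 : ((∑ i, μ i : ℝ) : ℂ) = (n : ℂ) := by
      rw [← htrace, h1]; push_cast; rfl
    exact_mod_cast h2
  set P : ℝ := ∏ i, μ i with hP
  have hPpos : 0 < P := Finset.prod_pos fun i _ => hμpos i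
  have hlog : Real.log P = ∑ i, Real.log (μ i) :=
    Real.log_prod fun i _ => (hμpos i).ne'
  have hloge : ∀ i, Real.log (μ i) ≤ μ i - 1 := fun i =>
    Real.log_le_sub_one_of_pos (hμpos i)
  have hsumle : ∑ i, Real.log (μ i) ≤ ∑ i, (μ i - 1) := Finset.sum_le_sum fun i _ => hloge i
  have hsumval : ∑ i : Fin n, (μ i - 1) = 0 := by
    rw [Finset.sum_sub_distrib, htrace2]
    simp
  have hPle : P ≤ 1 := by
    have : Real.log P ≤ 0 := by rw [hlog]; linarith
    exact (Real.log_nonpos_iff hPpos.le).mp this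
  have hDre : D.re = P := by
    show M.det.re = P
    rw [hdet]; simp
  have hDim : D.im = 0 := by
    show M.det.im = 0
    rw [hdet]; simp
  refine ⟨hDim, by rw [hDre]; exact hPpos, by rw [hDre]; exact hPle, ?_⟩
  rw [hDre]
  constructor
  · intro hP1
    -- all eigenvalues equal 1
    have hμ1 : ∀ i, μ i = 1 := by
      have hlog0 : ∑ i, Real.log (μ i) = 0 := by
        rw [← hlog, hP1, Real.log_one]
      have heq : ∀ i ∈ Finset.univ, Real.log (μ i) = μ i - 1 := by
        rw [← Finset.sum_eq_sum_iff_of_le fun i _ => hloge i]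
        rw [hlog0, hsumval]
      intro i
      by_contra hne
      exact absurd (heq i (Finset.mem_univ i))
        (ne_of_lt (Real.log_lt_sub_one_of_pos (hμpos i) hne))
    have hMone : M = 1 := by
      have hst := hM.spectral_theorem
      have : Matrix.diagonal (RCLike.ofReal ∘ μ) = (1 : Matrix (Fin n) (Fin n) ℂ) := by
        ext i j
        rcases eq_or_ne i j with rfl | hij
        · simp [Matrix.diagonal_apply_eq, Matrix.one_apply_eq, hμ1 i]
        · simp [Matrix.diagonal_apply_ne _ hij, Matrix.one_apply_ne hij]
      rw [this, Unitary.conjStarAlgAut_apply, mul_one] at hst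
      rw [hst, Matrix.mem_unitaryGroup_iff.mp hM.eigenvectorUnitary.2]
    intro i j
    have := congrFun (congrFun hMone i) j
    rw [hMapp] at this
    rw [this]
    by_cases h : i = j <;> simp [Matrix.one_apply, h]
  · intro him
    have hMone : M = 1 := by
      ext i j
      rw [hMapp]
      refine Complex.ext ?_ ?_
      · rw [horth i j]
        simp [Matrix.one_apply]
        split <;> simp
      · rw [him i j]
        simp [Matrix.one_apply]
        split <;> simp
    have hPre : M.det.re = P := by rw [hdet]; simp
    rw [← hPre, hMone]
    simp
end

section
/- Let g and ω be the real and symplectic parts of a Hermitian metric on Cⁿ and let π be a totally real n-plane with oriented g-orthonormal basis e₁,…,eₙ. Define ρ_J(π) = sqrt(det_C h(eᵢ,eⱼ)). Then ρ_J(π)² = vol(e₁, …, eₙ, Je₁, …, Jeₙ), where vol is the Riemannian volume form of the real 2n-dimensional inner product space. -/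
open scoped InnerProductSpace

open Matrix in
lemma det_fromBlocks_complex {n : ℕ} (X Y : Matrix (Fin n) (Fin n) ℂ) :
    (fromBlocks X (-Y) Y X).det = (X + Complex.I • Y).det * (X - Complex.I • Y).det := by
  have key : fromBlocks (1 : Matrix (Fin n) (Fin n) ℂ) (Complex.I • 1) 0 1 *
      fromBlocks X (-Y) Y X *
      fromBlocks 1 (-(Complex.I • (1 : Matrix (Fin n) (Fin n) ℂ))) 0 1 =
      fromBlocks (X + Complex.I • Y) 0 Y (X - Complex.I • Y) := by
    rw [fromBlocks_multiply, fromBlocks_multiply, fromBlocks_inj]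
    refine ⟨?_, ?_, ?_, ?_⟩ <;>
      simp [Matrix.smul_mul, Matrix.mul_smul, smul_smul, Complex.I_mul_I, sub_eq_add_neg] <;>
      abel
  have h1 := congrArg Matrix.det key
  rw [det_mul, det_mul, det_fromBlocks_zero₂₁, det_fromBlocks_zero₂₁,
    det_fromBlocks_zero₁₂] at h1
  simpa using h1

/-- In `ℂⁿ` with its standard Hermitian structure (`h = g − iω`,
`J = multiplication by i`), for a totally real `n`-plane with `g`-orthonormal basis
`e₁,…,eₙ`, one has `ρ_J(π)² = det_C h(eᵢ,eⱼ) = vol(e₁,…,eₙ,Je₁,…,Jeₙ)`, where `vol`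
is the Riemannian volume form of the underlying real `2n`-dimensional space (the
determinant of the real coordinate matrix of the `2n` vectors). -/
theorem stmt6 {n : ℕ} (e : Fin n → EuclideanSpace ℂ (Fin n))
    (horth : ∀ i j, (⟪e i, e j⟫_ℂ).re = if i = j then 1 else 0)
    (htr : ∀ x ∈ Submodule.span ℝ (Set.range e),
      Complex.I • x ∈ Submodule.span ℝ (Set.range e) → x = 0) :
    let w : Fin n ⊕ Fin n → EuclideanSpace ℂ (Fin n) :=
      Sum.elim e (fun j => Complex.I • e j)
    let B : Matrix (Fin n ⊕ Fin n) (Fin n ⊕ Fin n) ℝ :=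
      Matrix.of fun r c => Sum.elim (fun i => (w c i).re) (fun i => (w c i).im) r
    (Matrix.of fun i j => (⟪e i, e j⟫_ℂ)).det = (B.det : ℂ) := by
  intro w B
  set A : Matrix (Fin n) (Fin n) ℂ := Matrix.of fun i j => e j i with hA
  set X : Matrix (Fin n) (Fin n) ℂ := Matrix.of fun i j => ((e j i).re : ℂ) with hX
  set Y : Matrix (Fin n) (Fin n) ℂ := Matrix.of fun i j => ((e j i).im : ℂ) with hY
  -- Gram matrix = A.conjTranspose * A
  have hGram : (Matrix.of fun i j => (⟪e i, e j⟫_ℂ)) = A.conjTranspose * A := by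
    ext i j
    simp [Matrix.mul_apply, Matrix.conjTranspose_apply, hA, PiLp.inner_apply,
      RCLike.inner_apply]
    exact Finset.sum_congr rfl fun _ _ => mul_comm _ _
  -- B over ℂ is the block matrix
  have hB : B.map (algebraMap ℝ ℂ) = Matrix.fromBlocks X (-Y) Y X := by
    ext i j
    rcases i with i | i <;> rcases j with j | j <;>
      simp [B, w, X, Y, Matrix.fromBlocks, hX, hY, Complex.ofReal_neg]
  have hXY1 : X + Complex.I • Y = A := by
    ext i j
    simp only [hX, hY, hA, Matrix.add_apply, Matrix.smul_apply, Matrix.of_apply, smul_eq_mul]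
    rw [mul_comm]
    exact Complex.re_add_im _
  have hXY2 : X - Complex.I • Y = A.map (starRingEnd ℂ) := by
    ext i j
    simp [hX, hY, hA, Complex.ext_iff, sub_eq_add_neg]
  have hBdet : (B.det : ℂ) = (B.map (algebraMap ℝ ℂ)).det := by
    rw [← RingHom.mapMatrix_apply, ← RingHom.map_det]
    simp
  rw [hGram, hBdet, hB, det_fromBlocks_complex, hXY1, hXY2, Matrix.det_mul,
    Matrix.det_conjTranspose, ← RingHom.mapMatrix_apply, ← RingHom.map_det]
  simp [Complex.star_def, mul_comm]
end

section
/- For any totally real n-plane π in a Hermitian vector space with g-orthonormal basis e₁,…,eₙ, the quantity ρ_J(π) = sqrt(det_C h(eᵢ,eⱼ)) satisfies ρ_J(π) ≤ 1, with equality if and only if π is Lagrangian. -/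
open scoped InnerProductSpace ComplexOrder

/-- For a totally real `n`-plane in a Hermitian vector space with
`g`-orthonormal basis `e₁,…,eₙ`, the quantity `ρ_J(π) = sqrt(det_C h(eᵢ,eⱼ))`
satisfies `ρ_J(π) ≤ 1`, with equality iff the plane is Lagrangian (`ω|_π = 0`,
i.e. `Im h(eᵢ,eⱼ) = 0` for all `i,j`). -/
theorem stmt7 {n : ℕ} {V : Type*} [NormedAddCommGroup V] [InnerProductSpace ℂ V]
    [FiniteDimensional ℂ V] (hdim : Module.finrank ℂ V = n)
    (e : Fin n → V)
    (horth : ∀ i j, (⟪e i, e j⟫_ℂ).re = if i = j then 1 else 0)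
    (htr : ∀ x ∈ Submodule.span ℝ (Set.range e),
      Complex.I • x ∈ Submodule.span ℝ (Set.range e) → x = 0) :
    let ρJ : ℝ := Real.sqrt ((Matrix.of fun i j => (⟪e i, e j⟫_ℂ)).det).re
    ρJ ≤ 1 ∧ (ρJ = 1 ↔ ∀ i j, (⟪e i, e j⟫_ℂ).im = 0) := by
  classical
  intro ρJ
  set H : Matrix (Fin n) (Fin n) ℂ := Matrix.of fun i j => (⟪e i, e j⟫_ℂ) with hHdef
  have hHapp : ∀ i j, H i j = ⟪e i, e j⟫_ℂ := fun i j => rfl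
  -- H is Hermitian
  have hHerm : H.IsHermitian := by
    ext i j
    simp only [Matrix.conjTranspose_apply, hHapp]
    exact inner_conj_symm (e i) (e j)
  -- H is positive semidefinite (it is a Gram matrix)
  have hPSD : H.PosSemidef := by
    refine Matrix.PosSemidef.of_dotProduct_mulVec_nonneg hHerm fun x => ?_
    have key : dotProduct (star x) (H.mulVec x)
        = (⟪∑ i, x i • e i, ∑ j, x j • e j⟫_ℂ) := by
      rw [sum_inner]
      simp only [dotProduct, Matrix.mulVec, dotProduct, Pi.star_apply,
        inner_sum, inner_smul_left, inner_smul_right, Finset.mul_sum, hHapp]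
      refine Finset.sum_congr rfl fun i _ => Finset.sum_congr rfl fun j _ => ?_
      rw [Complex.star_def]
      ring
    rw [key, inner_self_eq_norm_sq_to_K, ← RCLike.ofReal_pow]
    have h0 : (0:ℝ) ≤ ‖∑ i, x i • e i‖^2 := by positivity
    exact RCLike.ofReal_nonneg.mpr h0
  set lam : Fin n → ℝ := hHerm.eigenvalues with hlam
  have hlam0 : ∀ i, 0 ≤ lam i := hPSD.eigenvalues_nonneg
  -- diagonal entries are 1
  have hdiag : ∀ i, H i i = 1 := by
    intro i
    have him : (H i i).im = 0 := by
      have := congrFun (congrFun hHerm i) i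
      simp only [Matrix.conjTranspose_apply] at this
      have := congrArg Complex.im this
      simp only [Complex.star_def, Complex.conj_im] at this
      linarith
    have hre := horth i i
    simp only [if_pos rfl] at hre
    exact Complex.ext (by rw [hHapp]; exact hre) him
  -- trace computations
  have htrace1 : H.trace = (n : ℂ) := by
    simp [Matrix.trace, Matrix.diag, hdiag]
  have hUstar : star (hHerm.eigenvectorUnitary : Matrix (Fin n) (Fin n) ℂ)
      * (hHerm.eigenvectorUnitary : Matrix (Fin n) (Fin n) ℂ) = 1 :=
    Unitary.coe_star_mul_self hHerm.eigenvectorUnitary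
  have htrace2 : H.trace = ((∑ i, lam i : ℝ) : ℂ) := by
    conv_lhs => rw [hHerm.spectral_theorem, Unitary.conjStarAlgAut_apply]
    rw [Matrix.trace_mul_cycle, hUstar, Matrix.one_mul]
    simp [Matrix.trace_diagonal]
    rfl
  have hsum : ∑ i, lam i = (n : ℝ) := by
    have := htrace1.symm.trans htrace2
    exact_mod_cast this.symm
  -- determinant
  have hdet : H.det = ((∏ i, lam i : ℝ) : ℂ) := by
    rw [hHerm.det_eq_prod_eigenvalues]
    push_cast
    rfl
  have hdetre : (H.det).re = ∏ i, lam i := by rw [hdet, Complex.ofReal_re]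
  have hρ : ρJ = Real.sqrt (∏ i, lam i) := by
    simp only [ρJ, ← hHdef, hdetre]
  -- product bound via x ≤ exp (x - 1)
  have hexp : ∀ i : Fin n, lam i ≤ Real.exp (lam i - 1) := by
    intro i
    have := Real.add_one_le_exp (lam i - 1)
    linarith
  have hprodexp : ∏ i, Real.exp (lam i - 1) = 1 := by
    rw [← Real.exp_sum]
    simp [Finset.sum_sub_distrib, hsum]
  have hprod_le : (∏ i, lam i) ≤ 1 := by
    calc (∏ i, lam i) ≤ ∏ i, Real.exp (lam i - 1) :=
          Finset.prod_le_prod (fun i _ => hlam0 i) (fun i _ => hexp i)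
      _ = 1 := hprodexp
  constructor
  · rw [hρ]
    calc Real.sqrt (∏ i, lam i) ≤ Real.sqrt 1 := Real.sqrt_le_sqrt hprod_le
      _ = 1 := Real.sqrt_one
  constructor
  · -- equality implies Lagrangian
    intro hρ1
    have hprod1 : (∏ i, lam i) = 1 := by
      rw [hρ] at hρ1
      exact Real.sqrt_eq_one.mp hρ1
    have hlampos : ∀ i, 0 < lam i := by
      intro i
      rcases (hlam0 i).lt_or_eq with h | h
      · exact h
      · exfalso
        have : (∏ j, lam j) = 0 := Finset.prod_eq_zero (Finset.mem_univ i) h.symm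
        rw [hprod1] at this; norm_num at this
    have hall1 : ∀ i, lam i = 1 := by
      by_contra hc
      push_neg at hc
      obtain ⟨j, hj⟩ := hc
      have hstrict : (∏ i, lam i) < ∏ i, Real.exp (lam i - 1) := by
        refine Finset.prod_lt_prod (fun i _ => hlampos i) (fun i _ => hexp i)
          ⟨j, Finset.mem_univ j, ?_⟩
        have := Real.add_one_lt_exp (x := lam j - 1) (by intro h; apply hj; linarith)
        linarith
      rw [hprodexp, hprod1] at hstrict
      exact lt_irrefl _ hstrict
    -- all eigenvalues are 1, hence H = 1
    have hdiag1 : Matrix.diagonal (RCLike.ofReal ∘ lam) = (1 : Matrix (Fin n) (Fin n) ℂ) := by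
      have hfun : (RCLike.ofReal ∘ lam : Fin n → ℂ) = fun _ => (1 : ℂ) :=
        funext fun i => by simp [hall1 i]
      rw [hfun, Matrix.diagonal_one]
    have hH1 : H = 1 := by
      have := hHerm.spectral_theorem
      rw [hdiag1, Unitary.conjStarAlgAut_apply, Matrix.mul_one] at this
      rw [this]
      exact Unitary.coe_mul_star_self hHerm.eigenvectorUnitary
    intro i j
    have : (⟪e i, e j⟫_ℂ) = (1 : Matrix (Fin n) (Fin n) ℂ) i j := by
      rw [← hHapp, hH1]
    rw [this, Matrix.one_apply]
    split <;> simp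
  · -- Lagrangian implies equality
    intro him
    have hH1 : H = 1 := by
      ext i j
      rw [hHapp, Matrix.one_apply]
      refine Complex.ext ?_ ?_
      · rw [horth i j]; split <;> simp
      · rw [him i j]; split <;> simp
    rw [hρ]
    have : ((∏ i, lam i : ℝ) : ℂ) = 1 := by rw [← hdet, hH1, Matrix.det_one]
    have h1 : (∏ i, lam i) = 1 := by exact_mod_cast this
    rw [h1, Real.sqrt_one]
end
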